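/- Let G=(V,E) be an undirected polymatroidal network with a fractional cut solution ℓ, ℓ(e,u), ℓ(e,v). Let g: V → [0,β] be 1-Lipschitz with respect to dist_ℓ, and for θ ∈ (0,β) let S_θ = {u ∈ V : g(u) ≤ θ}. Then ∫_0^β ν(δ(S_θ)) dθ ≤ 2·Σ_{u∈V} ρ̂_u(d_u). -/

import Mathlib

open Finset MeasureTheory
open scoped ENNReal Classical

/-- `UWalk ep1 ep2 s t p`: in the undirected graph whose edge `e` has endpoints
`ep1 e` and `ep2 e`, the list of edges `p` forms a walk from `s` to `t`. -/
def UWalk {V E : Type} [DecidableEq V] (ep1 ep2 : E → V) : V → V → List E → Prop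
  | s, t, [] => s = t
  | s, t, e :: p => (ep1 e = s ∨ ep2 e = s) ∧
      UWalk ep1 ep2 (if ep1 e = s then ep2 e else ep1 e) t p

/-- The list of vertices visited by an undirected walk starting at `s`. -/
def uwalkVerts {V E : Type} [DecidableEq V] (ep1 ep2 : E → V) : V → List E → List V
  | s, [] => [s]
  | s, e :: p => s :: uwalkVerts ep1 ep2 (if ep1 e = s then ep2 e else ep1 e) p

/-- A simple undirected path from `s` to `t`. -/
def UIsPath {V E : Type} [DecidableEq V] (ep1 ep2 : E → V) (s t : V) (p : List E) : Prop :=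
  UWalk ep1 ep2 s t p ∧ (uwalkVerts ep1 ep2 s p).Nodup

/-- `F` separates `s` and `t`: they lie in different connected components of `G∖F`. -/
def USep {V E : Type} [DecidableEq V] (ep1 ep2 : E → V) (F : Finset E) (s t : V) : Prop :=
  ¬ ∃ p : List E, UWalk ep1 ep2 s t p ∧ ∀ e ∈ p, e ∉ F

/-- `δ(S)`: the set of edges with exactly one endpoint in `S`. -/
def uvcut {V E : Type} [Fintype E] [DecidableEq V] (ep1 ep2 : E → V) (S : Finset V) :
    Finset E :=
  Finset.univ.filter (fun e => (ep1 e ∈ S ∧ ep2 e ∉ S) ∨ (ep1 e ∉ S ∧ ep2 e ∈ S))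

/-- Shortest-path distance (in `ℝ≥0∞`, `⊤` when unreachable) under edge lengths `len`. -/
noncomputable def udist {V E : Type} [DecidableEq V] (ep1 ep2 : E → V) (len : E → ℝ)
    (u v : V) : ℝ≥0∞ :=
  ⨅ p : { p : List E // UWalk ep1 ep2 u v p }, ENNReal.ofReal ((p.1.map len).sum)

/-- The Lovász extension of `ρ` on the ground set `ground`,
`ρ̂(x) = ∫_0^∞ ρ({e ∈ ground : x e ≥ θ}) dθ` (which agrees with `∫_0^1` when `x ≤ 1`). -/
noncomputable def lovaszExt {E : Type} [Fintype E] (ρ : Finset E → ℝ)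
    (ground : Finset E) (x : E → ℝ) : ℝ :=
  ∫ θ in Set.Ioi (0:ℝ), ρ (ground.filter (fun e => θ ≤ x e))

/-- An undirected polymatroidal network: a finite undirected graph together with,
for each node `v`, a polymatroid `rho v` on the set of edges incident to `v`. -/
structure UPolyNet (V E : Type) [Fintype V] [Fintype E] [DecidableEq V] [DecidableEq E] where
  ep1 : E → V
  ep2 : E → V
  rho : V → Finset E → ℝ
  rho_empty : ∀ v, rho v ∅ = 0
  rho_nonneg : ∀ v A, A ⊆ Finset.univ.filter (fun e => ep1 e = v ∨ ep2 e = v) → 0 ≤ rho v A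
  rho_mono : ∀ v A B, A ⊆ B → B ⊆ Finset.univ.filter (fun e => ep1 e = v ∨ ep2 e = v) →
    rho v A ≤ rho v B
  rho_submod : ∀ v A B, A ⊆ Finset.univ.filter (fun e => ep1 e = v ∨ ep2 e = v) →
    B ⊆ Finset.univ.filter (fun e => ep1 e = v ∨ ep2 e = v) →
    rho v (A ∪ B) + rho v (A ∩ B) ≤ rho v A + rho v B

namespace UPolyNet

variable {V E : Type} [Fintype V] [Fintype E] [DecidableEq V] [DecidableEq E]

/-- The set `δ(v)` of edges incident to `v` (the ground set of `rho v`). -/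
def incE (N : UPolyNet V E) (v : V) : Finset E :=
  Finset.univ.filter (fun e => N.ep1 e = v ∨ N.ep2 e = v)

/-- The cost `ν(F)` of the edge cut `F`: the minimum over valid assignments `g` of
the edges of `F` to their endpoints of `Σ_v ρ_v(g⁻¹(v))`. -/
noncomputable def cutCost (N : UPolyNet V E) (F : Finset E) : ℝ :=
  sInf { c : ℝ | ∃ g : E → V, (∀ e ∈ F, g e = N.ep1 e ∨ g e = N.ep2 e) ∧
    c = ∑ v : V, N.rho v ((N.incE v ∩ F).filter (fun e => g e = v)) }

/-- Total flow on an edge `e`. -/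
noncomputable def edgeFlow (N : UPolyNet V E) {ι : Type} [Fintype ι]
    (f : ι → List E → ℝ) (e : E) : ℝ :=
  ∑ i : ι, ∑ᶠ p ∈ {p : List E | e ∈ p}, f i p

/-- The rate of commodity `i`. -/
noncomputable def rate {ι : Type} (f : ι → List E → ℝ) (i : ι) : ℝ :=
  ∑ᶠ p : List E, f i p

/-- A feasible multicommodity flow for the source-sink pairs `(s i, t i)`. -/
structure IsFlow (N : UPolyNet V E) {ι : Type} [Fintype ι] (s t : ι → V)
    (f : ι → List E → ℝ) : Prop where
  nonneg : ∀ i p, 0 ≤ f i p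
  supp : ∀ i p, f i p ≠ 0 → UIsPath N.ep1 N.ep2 (s i) (t i) p
  fin : ∀ i, (Function.support (f i)).Finite
  cap : ∀ v, ∀ S ⊆ N.incE v, ∑ e ∈ S, N.edgeFlow f e ≤ N.rho v S

/-- `D(F)`: the total demand of the pairs separated by `F`. -/
noncomputable def sepDemand (N : UPolyNet V E) {ι : Type} [Fintype ι]
    (s t : ι → V) (D : ι → ℝ) (F : Finset E) : ℝ :=
  ∑ i : ι, if USep N.ep1 N.ep2 F (s i) (t i) then D i else 0

/-- The value of the maximum throughput multicommodity flow. -/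
noncomputable def maxThroughput (N : UPolyNet V E) {ι : Type} [Fintype ι]
    (s t : ι → V) : ℝ :=
  sSup { r : ℝ | ∃ f : ι → List E → ℝ, N.IsFlow s t f ∧ r = ∑ i : ι, rate f i }

/-- The value of the maximum concurrent multicommodity flow for demands `D`. -/
noncomputable def maxConcurrent (N : UPolyNet V E) {ι : Type} [Fintype ι]
    (s t : ι → V) (D : ι → ℝ) : ℝ :=
  sSup { lam : ℝ | ∃ f : ι → List E → ℝ, N.IsFlow s t f ∧ ∀ i, rate f i = lam * D i }

/-- The vector `d_v`: for an edge `e` incident to `v`, its portion `ℓ(e,v)`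
assigned to `v` by the fractional cut solution with portions `c1` (at `ep1`)
and `c2` (at `ep2`). -/
def dvec (N : UPolyNet V E) (c1 c2 : E → ℝ) (v : V) : E → ℝ :=
  fun e => if N.ep1 e = v then c1 e else c2 e

/-- `ρ̂_v(d_v)`, the contribution of the node `v` to the fractional cut cost. -/
noncomputable def nodeVol (N : UPolyNet V E) (c1 c2 : E → ℝ) (v : V) : ℝ :=
  lovaszExt (N.rho v) (N.incE v) (N.dvec c1 c2 v)

/-- `vol(X) = Σ_{v ∈ X} ρ̂_v(d_v)`. -/
noncomputable def vol (N : UPolyNet V E) (c1 c2 : E → ℝ) (X : Finset V) : ℝ :=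
  ∑ v ∈ X, N.nodeVol c1 c2 v

end UPolyNet

open UPolyNet

section AuxLemmas

variable {E : Type} [Fintype E] [DecidableEq E]

lemma measSet_filter_eq (s A : Finset E) (p : ℝ → E → Prop)
    (hp : ∀ e, MeasurableSet {θ : ℝ | p θ e}) :
    MeasurableSet {θ : ℝ | s.filter (fun e => p θ e) = A} := by
  by_cases hA : A ⊆ s
  · have hset : {θ : ℝ | s.filter (fun e => p θ e) = A}
        = ⋂ e : E, {θ : ℝ | e ∈ s → (p θ e ↔ e ∈ A)} := by
      ext θ
      simp only [Set.mem_setOf_eq, Set.mem_iInter, Finset.ext_iff, Finset.mem_filter]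
      constructor
      · intro h e he
        constructor
        · intro hpe; exact (h e).1 ⟨he, hpe⟩
        · intro heA; exact ((h e).2 heA).2
      · intro h e
        by_cases hes : e ∈ s
        · constructor
          · rintro ⟨-, hpe⟩; exact (h e hes).1 hpe
          · intro heA; exact ⟨hes, (h e hes).2 heA⟩
        · constructor
          · rintro ⟨hes', -⟩; exact absurd hes' hes
          · intro heA; exact absurd (hA heA) hes
    rw [hset]
    refine MeasurableSet.iInter fun e => ?_
    by_cases hes : e ∈ s
    · simp only [hes, true_implies]
      by_cases heA : e ∈ A
      · simp only [heA, iff_true]; exact hp e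
      · simp only [heA, iff_false]; exact (hp e).compl
    · simp only [hes, false_implies, Set.setOf_true]
      exact MeasurableSet.univ
  · have hset : {θ : ℝ | s.filter (fun e => p θ e) = A} = ∅ := by
      ext θ
      simp only [Set.mem_setOf_eq, Set.mem_empty_iff_false, iff_false]
      intro h
      exact hA (h ▸ Finset.filter_subset _ s)
    rw [hset]; exact MeasurableSet.empty

lemma measurable_rho_filter (ρ : Finset E → ℝ) (s : Finset E) (p : ℝ → E → Prop)
    (hp : ∀ e, MeasurableSet {θ : ℝ | p θ e}) :
    Measurable (fun θ : ℝ => ρ (s.filter (fun e => p θ e))) := by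
  have hrw : (fun θ : ℝ => ρ (s.filter (fun e => p θ e)))
      = fun θ => ∑ A ∈ s.powerset, if s.filter (fun e => p θ e) = A then ρ A else 0 := by
    funext θ
    rw [Finset.sum_ite_eq, if_pos (Finset.mem_powerset.2 (Finset.filter_subset _ _))]
  rw [hrw]
  exact Finset.measurable_sum _ fun A _ =>
    Measurable.ite (measSet_filter_eq s A p hp) measurable_const measurable_const

lemma abs_rho_filter_le (ρ : Finset E → ℝ) (s t : Finset E) (ht : t ⊆ s) :
    |ρ t| ≤ ∑ A ∈ s.powerset, |ρ A| :=
  Finset.single_le_sum (fun A _ => abs_nonneg (ρ A)) (Finset.mem_powerset.2 ht)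

lemma intervalIntegrable_rho_filter (ρ : Finset E → ℝ) (s : Finset E) (p : ℝ → E → Prop)
    (hp : ∀ e, MeasurableSet {θ : ℝ | p θ e}) (a b : ℝ) :
    IntervalIntegrable (fun θ : ℝ => ρ (s.filter (fun e => p θ e))) volume a b := by
  refine IntervalIntegrable.mono_fun' (g := fun _ => ∑ A ∈ s.powerset, |ρ A|)
    intervalIntegrable_const
    (measurable_rho_filter ρ s p hp).aestronglyMeasurable ?_
  filter_upwards with θ
  rw [Real.norm_eq_abs]
  exact abs_rho_filter_le ρ s _ (Finset.filter_subset _ _)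

lemma integrableOn_rho_filter_Ioi (ρ : Finset E → ℝ) (h0 : ρ ∅ = 0) (s : Finset E)
    (x : E → ℝ) :
    MeasureTheory.IntegrableOn (fun θ : ℝ => ρ (s.filter (fun e => θ ≤ x e)))
      (Set.Ioi 0) := by
  obtain ⟨M0, hM0⟩ := Finset.exists_le (Finset.univ.image x)
  have hxM : ∀ e : E, x e ≤ max M0 0 := fun e =>
    le_trans (hM0 _ (Finset.mem_image_of_mem x (Finset.mem_univ e))) (le_max_left _ _)
  have hmeas : Measurable (fun θ : ℝ => ρ (s.filter (fun e => θ ≤ x e))) :=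
    measurable_rho_filter ρ s _ (fun e => measurableSet_Iic)
  rw [show Set.Ioi (0:ℝ) = Set.Ioc 0 (max M0 0) ∪ Set.Ioi (max M0 0) from
    (Set.Ioc_union_Ioi_eq_Ioi (le_max_right M0 0)).symm]
  apply MeasureTheory.IntegrableOn.union
  · refine MeasureTheory.Integrable.mono' (g := fun _ => ∑ A ∈ s.powerset, |ρ A|)
      (MeasureTheory.integrableOn_const measure_Ioc_lt_top.ne)
      hmeas.aestronglyMeasurable ?_
    filter_upwards with θ
    rw [Real.norm_eq_abs]
    exact abs_rho_filter_le ρ s _ (Finset.filter_subset _ _)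
  · refine MeasureTheory.IntegrableOn.congr_fun
      (MeasureTheory.integrableOn_zero) ?_ measurableSet_Ioi
    intro θ hθ
    have hemp : s.filter (fun e => θ ≤ x e) = ∅ :=
      Finset.filter_false_of_mem (fun e _ => not_le.2 ((hxM e).trans_lt hθ))
    simp [hemp, h0]

lemma intervalIntegral_le_integral_Ioi (f : ℝ → ℝ)
    (hf : MeasureTheory.IntegrableOn f (Set.Ioi 0))
    (hpos : ∀ θ : ℝ, 0 ≤ f θ) {b : ℝ} (hb : 0 ≤ b) :
    (∫ θ in (0:ℝ)..b, f θ) ≤ ∫ θ in Set.Ioi (0:ℝ), f θ := by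
  rw [intervalIntegral.integral_of_le hb]
  exact MeasureTheory.setIntegral_mono_set hf (MeasureTheory.ae_of_all _ hpos)
    (HasSubset.Subset.eventuallyLE Set.Ioc_subset_Ioi_self)

lemma node_bound (ρ : Finset E → ℝ) (grd : Finset E) (x : E → ℝ)
    (h0 : ρ ∅ = 0) (hnn : ∀ A : Finset E, A ⊆ grd → 0 ≤ ρ A)
    {a β : ℝ} (ha0 : 0 ≤ a) (haβ : a ≤ β) :
    (∫ θ in (0:ℝ)..β, ρ (grd.filter (fun e => |θ - a| ≤ x e)))
      ≤ 2 * lovaszExt ρ grd x := by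
  have hpmeas : ∀ e : E, MeasurableSet {θ : ℝ | |θ - a| ≤ x e} := fun e =>
    measurableSet_le ((measurable_id.sub measurable_const).abs) measurable_const
  have hfint : ∀ u v : ℝ,
      IntervalIntegrable (fun θ => ρ (grd.filter (fun e => |θ - a| ≤ x e))) volume u v :=
    fun u v => intervalIntegrable_rho_filter ρ grd _ hpmeas u v
  have hGios : MeasureTheory.IntegrableOn
      (fun θ : ℝ => ρ (grd.filter (fun e => θ ≤ x e))) (Set.Ioi 0) :=
    integrableOn_rho_filter_Ioi ρ h0 grd x
  have hGpos : ∀ θ : ℝ, 0 ≤ ρ (grd.filter (fun e => θ ≤ x e)) := fun θ =>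
    hnn _ (Finset.filter_subset _ _)
  have hsplit := intervalIntegral.integral_add_adjacent_intervals (hfint 0 a) (hfint a β)
  rw [← hsplit]
  have h1 : (∫ θ in (0:ℝ)..a, ρ (grd.filter (fun e => |θ - a| ≤ x e)))
      = ∫ θ in (0:ℝ)..a, ρ (grd.filter (fun e => a - θ ≤ x e)) := by
    apply intervalIntegral.integral_congr
    intro θ hθ
    rw [Set.uIcc_of_le ha0] at hθ
    have habs : |θ - a| = a - θ := by
      rw [abs_of_nonpos (by linarith [hθ.2])]; ring
    simp only [habs]
  have h1' : (∫ θ in (0:ℝ)..a, ρ (grd.filter (fun e => a - θ ≤ x e)))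
      = ∫ u in (0:ℝ)..a, ρ (grd.filter (fun e => u ≤ x e)) := by
    have := intervalIntegral.integral_comp_sub_left (a := 0) (b := a)
      (fun u : ℝ => ρ (grd.filter (fun e => u ≤ x e))) a
    simpa using this
  have h2 : (∫ θ in a..β, ρ (grd.filter (fun e => |θ - a| ≤ x e)))
      = ∫ θ in a..β, ρ (grd.filter (fun e => θ - a ≤ x e)) := by
    apply intervalIntegral.integral_congr
    intro θ hθ
    rw [Set.uIcc_of_le haβ] at hθ
    have habs : |θ - a| = θ - a := abs_of_nonneg (by linarith [hθ.1])
    simp only [habs]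
  have h2' : (∫ θ in a..β, ρ (grd.filter (fun e => θ - a ≤ x e)))
      = ∫ u in (0:ℝ)..(β - a), ρ (grd.filter (fun e => u ≤ x e)) := by
    have := intervalIntegral.integral_comp_sub_right (a := a) (b := β)
      (fun u : ℝ => ρ (grd.filter (fun e => u ≤ x e))) a
    simpa using this
  have hA : (∫ u in (0:ℝ)..a, ρ (grd.filter (fun e => u ≤ x e)))
      ≤ lovaszExt ρ grd x :=
    intervalIntegral_le_integral_Ioi _ hGios hGpos ha0
  have hB : (∫ u in (0:ℝ)..(β - a), ρ (grd.filter (fun e => u ≤ x e)))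
      ≤ lovaszExt ρ grd x :=
    intervalIntegral_le_integral_Ioi _ hGios hGpos (by linarith)
  rw [h1, h1', h2, h2']
  linarith

end AuxLemmas

lemma udist_le_edge {V E : Type} [DecidableEq V] (ep1 ep2 : E → V) (len : E → ℝ) (e : E) :
    udist ep1 ep2 len (ep1 e) (ep2 e) ≤ ENNReal.ofReal (len e) := by
  have hw : UWalk ep1 ep2 (ep1 e) (ep2 e) [e] := by
    refine ⟨Or.inl rfl, ?_⟩
    rw [if_pos rfl]
    show (ep2 e) = (ep2 e)
    rfl
  calc udist ep1 ep2 len (ep1 e) (ep2 e)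
      ≤ ENNReal.ofReal (([e].map len).sum) := iInf_le _ (⟨[e], hw⟩ : { p : List E // UWalk ep1 ep2 (ep1 e) (ep2 e) p })
    _ = ENNReal.ofReal (len e) := by simp

lemma nodeVol_nonneg {V E : Type} [Fintype V] [Fintype E] [DecidableEq V] [DecidableEq E]
    (N : UPolyNet V E) (c1 c2 : E → ℝ) (v : V) : 0 ≤ N.nodeVol c1 c2 v := by
  rw [UPolyNet.nodeVol, lovaszExt]
  apply MeasureTheory.setIntegral_nonneg measurableSet_Ioi
  intro θ _
  exact N.rho_nonneg v _ (Finset.filter_subset _ _)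

lemma cutCost_le_levelBound {V E : Type} [Fintype V] [Fintype E] [DecidableEq V]
    [DecidableEq E] (N : UPolyNet V E) (ℓ c1 c2 : E → ℝ)
    (hc1 : ∀ e, 0 ≤ c1 e) (hc2 : ∀ e, 0 ≤ c2 e) (hsum : ∀ e, c1 e + c2 e = ℓ e)
    (g : V → ℝ)
    (hLip : ∀ u v : V, ENNReal.ofReal |g u - g v| ≤ udist N.ep1 N.ep2 ℓ u v) (θ : ℝ) :
    N.cutCost (uvcut N.ep1 N.ep2 (Finset.univ.filter (fun u => g u ≤ θ)))
      ≤ ∑ v : V, N.rho v ((N.incE v).filter (fun e => |θ - g v| ≤ N.dvec c1 c2 v e)) := by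
  set F := uvcut N.ep1 N.ep2 (Finset.univ.filter (fun u => g u ≤ θ)) with hF
  set gass : E → V := fun e => if |θ - g (N.ep1 e)| ≤ c1 e then N.ep1 e else N.ep2 e
    with hgass
  have hsubset : ∀ v : V, (N.incE v ∩ F).filter (fun e => gass e = v)
      ⊆ (N.incE v).filter (fun e => |θ - g v| ≤ N.dvec c1 c2 v e) := by
    intro v e he
    rw [Finset.mem_filter] at he
    rw [Finset.mem_filter]
    obtain ⟨heIF, hev⟩ := he
    rw [Finset.mem_inter] at heIF
    obtain ⟨heI, heF⟩ := heIF
    refine ⟨heI, ?_⟩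
    have hcross : (g (N.ep1 e) ≤ θ ∧ ¬ g (N.ep2 e) ≤ θ)
        ∨ (¬ g (N.ep1 e) ≤ θ ∧ g (N.ep2 e) ≤ θ) := by
      have h := heF
      rw [hF] at h
      simpa [uvcut] using h
    have hne : N.ep1 e ≠ N.ep2 e := by
      intro hEq
      rcases hcross with ⟨h1, h2⟩ | ⟨h1, h2⟩
      · rw [hEq] at h1; exact h2 h1
      · rw [← hEq] at h2; exact h1 h2
    have hlen : |g (N.ep1 e) - g (N.ep2 e)| ≤ c1 e + c2 e := by
      have hle1 := (hLip (N.ep1 e) (N.ep2 e)).trans (udist_le_edge N.ep1 N.ep2 ℓ e)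
      have hℓ0 : 0 ≤ ℓ e := by
        have := hc1 e; have := hc2 e; linarith [hsum e]
      have := (ENNReal.ofReal_le_ofReal_iff hℓ0).1 hle1
      linarith [hsum e]
    by_cases hcase : |θ - g (N.ep1 e)| ≤ c1 e
    · have hv : N.ep1 e = v := by
        rw [hgass] at hev
        simpa [hcase] using hev
      rw [UPolyNet.dvec]
      rw [if_pos hv, ← hv]
      exact hcase
    · have hv : N.ep2 e = v := by
        rw [hgass] at hev
        simpa [hcase] using hev
      have hnv : ¬ (N.ep1 e = v) := fun h => hne (h.trans hv.symm)
      rw [UPolyNet.dvec]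
      rw [if_neg hnv, ← hv]
      have habs : |θ - g (N.ep1 e)| + |θ - g (N.ep2 e)|
          = |g (N.ep1 e) - g (N.ep2 e)| := by
        rcases hcross with ⟨h1, h2⟩ | ⟨h1, h2⟩
        · push_neg at h2
          rw [abs_of_nonneg (by linarith : (0:ℝ) ≤ θ - g (N.ep1 e)),
            abs_of_nonpos (by linarith : θ - g (N.ep2 e) ≤ 0),
            abs_of_nonpos (by linarith : g (N.ep1 e) - g (N.ep2 e) ≤ 0)]
          ring
        · push_neg at h1
          rw [abs_of_nonpos (by linarith : θ - g (N.ep1 e) ≤ 0),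
            abs_of_nonneg (by linarith : (0:ℝ) ≤ θ - g (N.ep2 e)),
            abs_of_nonneg (by linarith : (0:ℝ) ≤ g (N.ep1 e) - g (N.ep2 e))]
          ring
      have hcase' := not_le.1 hcase
      linarith
  have hbdd : BddBelow {c : ℝ | ∃ g' : E → V,
      (∀ e ∈ F, g' e = N.ep1 e ∨ g' e = N.ep2 e) ∧
      c = ∑ v : V, N.rho v ((N.incE v ∩ F).filter (fun e => g' e = v))} := by
    refine ⟨0, fun c hc => ?_⟩
    obtain ⟨g', -, rfl⟩ := hc
    refine Finset.sum_nonneg fun v _ => N.rho_nonneg v _ ?_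
    exact (Finset.filter_subset _ _).trans Finset.inter_subset_left
  have hmem : (∑ v : V, N.rho v ((N.incE v ∩ F).filter (fun e => gass e = v))) ∈
      {c : ℝ | ∃ g' : E → V,
      (∀ e ∈ F, g' e = N.ep1 e ∨ g' e = N.ep2 e) ∧
      c = ∑ v : V, N.rho v ((N.incE v ∩ F).filter (fun e => g' e = v))} := by
    refine ⟨gass, fun e _ => ?_, rfl⟩
    rw [hgass]
    dsimp only
    split
    · exact Or.inl rfl
    · exact Or.inr rfl
  calc N.cutCost F
      ≤ ∑ v : V, N.rho v ((N.incE v ∩ F).filter (fun e => gass e = v)) :=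
        csInf_le hbdd hmem
    _ ≤ ∑ v : V, N.rho v ((N.incE v).filter (fun e => |θ - g v| ≤ N.dvec c1 c2 v e)) :=
        Finset.sum_le_sum fun v _ =>
          N.rho_mono v _ _ (hsubset v) (Finset.filter_subset _ _)

/-- Let `N` be an undirected polymatroidal network with a fractional
cut solution (`ℓ e = c1 e + c2 e`), and let `g : V → [0,β]` be 1-Lipschitz w.r.t.
`dist_ℓ`. With `S_θ = {u : g u ≤ θ}` one has
`∫_0^β ν(δ(S_θ)) dθ ≤ 2 · Σ_u ρ̂_u(d_u)`. -/
theorem line_embedding_cut_cost_bound {V E : Type} [Fintype V] [Fintype E]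
    [DecidableEq V] [DecidableEq E] (N : UPolyNet V E)
    (ℓ c1 c2 : E → ℝ) (hc1 : ∀ e, 0 ≤ c1 e) (hc2 : ∀ e, 0 ≤ c2 e)
    (hsum : ∀ e, c1 e + c2 e = ℓ e)
    (β : ℝ) (g : V → ℝ) (hg : ∀ u, g u ∈ Set.Icc (0:ℝ) β)
    (hLip : ∀ u v : V, ENNReal.ofReal |g u - g v| ≤ udist N.ep1 N.ep2 ℓ u v) :
    (∫ θ in (0:ℝ)..β,
        N.cutCost (uvcut N.ep1 N.ep2 (Finset.univ.filter (fun u => g u ≤ θ)))) ≤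
      2 * ∑ u : V, N.nodeVol c1 c2 u := by
  by_cases hV : Nonempty V
  · have hβ : 0 ≤ β := by
      obtain ⟨v⟩ := hV
      exact le_trans (hg v).1 (hg v).2
    have hIv : ∀ v : V, IntervalIntegrable
        (fun θ => N.rho v ((N.incE v).filter (fun e => |θ - g v| ≤ N.dvec c1 c2 v e)))
        volume 0 β := fun v =>
      intervalIntegrable_rho_filter _ _ _
        (fun e => measurableSet_le ((measurable_id.sub measurable_const).abs)
          measurable_const) 0 β
    have hIsum : IntervalIntegrable
        (fun θ => ∑ v : V,
          N.rho v ((N.incE v).filter (fun e => |θ - g v| ≤ N.dvec c1 c2 v e)))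
        volume 0 β := by
      have h := IntervalIntegrable.sum (μ := volume) (a := 0) (b := β) Finset.univ
        (f := fun (v : V) (θ : ℝ) =>
          N.rho v ((N.incE v).filter (fun e => |θ - g v| ≤ N.dvec c1 c2 v e)))
        (fun v _ => hIv v)
      have hfe : (∑ v : V, fun (θ : ℝ) =>
          N.rho v ((N.incE v).filter (fun e => |θ - g v| ≤ N.dvec c1 c2 v e)))
          = fun θ => ∑ v : V,
            N.rho v ((N.incE v).filter (fun e => |θ - g v| ≤ N.dvec c1 c2 v e)) := by
        funext θ
        simp
      rw [hfe] at h
      exact h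
    by_cases hfi : IntervalIntegrable (fun θ =>
        N.cutCost (uvcut N.ep1 N.ep2 (Finset.univ.filter (fun u => g u ≤ θ)))) volume 0 β
    · calc (∫ θ in (0:ℝ)..β,
            N.cutCost (uvcut N.ep1 N.ep2 (Finset.univ.filter (fun u => g u ≤ θ))))
          ≤ ∫ θ in (0:ℝ)..β, ∑ v : V,
              N.rho v ((N.incE v).filter (fun e => |θ - g v| ≤ N.dvec c1 c2 v e)) :=
            intervalIntegral.integral_mono_on hβ hfi hIsum
              (fun θ _ => cutCost_le_levelBound N ℓ c1 c2 hc1 hc2 hsum g hLip θ)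
        _ = ∑ v : V, ∫ θ in (0:ℝ)..β,
              N.rho v ((N.incE v).filter (fun e => |θ - g v| ≤ N.dvec c1 c2 v e)) :=
            intervalIntegral.integral_finset_sum (fun v _ => hIv v)
        _ ≤ ∑ v : V, 2 * N.nodeVol c1 c2 v := by
            refine Finset.sum_le_sum fun v _ => ?_
            have hb := node_bound (N.rho v) (N.incE v) (N.dvec c1 c2 v) (N.rho_empty v)
              (fun A hA => N.rho_nonneg v A hA) (hg v).1 (hg v).2
            simpa [UPolyNet.nodeVol] using hb
        _ = 2 * ∑ v : V, N.nodeVol c1 c2 v := (Finset.mul_sum _ _ _).symm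
    · rw [intervalIntegral.integral_undef hfi]
      exact mul_nonneg (by norm_num)
        (Finset.sum_nonneg fun v _ => nodeVol_nonneg N c1 c2 v)
  · haveI hVe : IsEmpty V := not_nonempty_iff.1 hV
    haveI hEe : IsEmpty E := ⟨fun e => hVe.false (N.ep1 e)⟩
    have hconst : ∀ θ : ℝ,
        N.cutCost (uvcut N.ep1 N.ep2 (Finset.univ.filter (fun u => g u ≤ θ))) = 0 := by
      intro θ
      rw [UPolyNet.cutCost]
      have hset : {c : ℝ | ∃ g' : E → V,
          (∀ e ∈ uvcut N.ep1 N.ep2 (Finset.univ.filter (fun u => g u ≤ θ)),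
            g' e = N.ep1 e ∨ g' e = N.ep2 e) ∧
          c = ∑ v : V, N.rho v ((N.incE v ∩
            uvcut N.ep1 N.ep2 (Finset.univ.filter (fun u => g u ≤ θ))).filter
              (fun e => g' e = v))} = {0} := by
        ext c
        simp only [Set.mem_setOf_eq, Set.mem_singleton_iff]
        constructor
        · rintro ⟨g', -, rfl⟩
          simp [Finset.univ_eq_empty]
        · rintro rfl
          exact ⟨fun e => (hEe.false e).elim, fun e he => (hEe.false e).elim,
            by simp [Finset.univ_eq_empty]⟩
      rw [hset, csInf_singleton]
    simp only [hconst]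
    simp [Finset.univ_eq_empty]
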